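/- If a, b ∈ A satisfy a - r_a = b - r_b for quasinilpotent elements r_a, r_b commuting with a and b respectively, then ϱ(a,b) = 0. -/

import Mathlib

open Filter in
noncomputable def varrho {A : Type*} [NormedRing A] (a b : A) : ℝ :=
  atTop.limsup fun n : ℕ => ‖(fun x => a * x - x * b)^[n] 1‖ ^ ((n : ℝ)⁻¹)

open Filter Finset Topology

/-- From quasinilpotence, a geometric bound on powers. -/
lemma quasinil_bound {A : Type*} [NormedRing A] [NormedAlgebra ℂ A] [CompleteSpace A]
    (r : A) (hr : spectralRadius ℂ r = 0) {ε : ℝ} (hε : 0 < ε) :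
    ∃ M : ℝ, 1 ≤ M ∧ ∀ n : ℕ, ‖r ^ n‖ ≤ M * ε ^ n := by
  have h0 : Tendsto (fun n : ℕ => ‖r ^ n‖ ^ ((n : ℝ)⁻¹)) atTop (𝓝 0) := by
    have h1 := spectrum.pow_norm_pow_one_div_tendsto_nhds_spectralRadius r
    rw [hr] at h1
    have h2 := (ENNReal.tendsto_toReal (by simp)).comp h1
    simp only [Function.comp_def, ENNReal.toReal_ofReal
      (Real.rpow_nonneg (norm_nonneg _) _), ENNReal.toReal_zero, one_div] at h2
    exact h2
  obtain ⟨N, hN⟩ := eventually_atTop.1 (h0.eventually (gt_mem_nhds hε))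
  have key : ∀ n, max N 1 ≤ n → ‖r ^ n‖ ≤ ε ^ n := by
    intro n hn
    have hn1 : n ≠ 0 := by omega
    have h1 : ‖r ^ n‖ ^ ((n : ℝ)⁻¹) ≤ ε := (hN n (le_trans (le_max_left _ _) hn)).le
    calc ‖r ^ n‖ = (‖r ^ n‖ ^ ((n : ℝ)⁻¹)) ^ n :=
          (Real.rpow_inv_natCast_pow (norm_nonneg _) hn1).symm
      _ ≤ ε ^ n := pow_le_pow_left₀ (Real.rpow_nonneg (norm_nonneg _) _) h1 n
  refine ⟨1 + ∑ k ∈ range (max N 1), ‖r ^ k‖ / ε ^ k, le_add_of_nonneg_right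
    (Finset.sum_nonneg fun k _ => div_nonneg (norm_nonneg _) (pow_nonneg hε.le _)), fun n => ?_⟩
  rcases lt_or_ge n (max N 1) with h | h
  · have h1 : ‖r ^ n‖ / ε ^ n ≤ ∑ k ∈ range (max N 1), ‖r ^ k‖ / ε ^ k :=
      Finset.single_le_sum (f := fun k => ‖r ^ k‖ / ε ^ k)
        (fun k _ => div_nonneg (norm_nonneg _) (pow_nonneg hε.le k)) (Finset.mem_range.2 h)
    rw [div_le_iff₀ (pow_pos hε n)] at h1
    calc ‖r ^ n‖ ≤ (∑ k ∈ range (max N 1), ‖r ^ k‖ / ε ^ k) * ε ^ n := h1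
      _ ≤ _ := by nlinarith [pow_pos hε n,
          Finset.sum_nonneg (fun k (_ : k ∈ range (max N 1)) =>
            div_nonneg (norm_nonneg (r ^ k)) (pow_nonneg hε.le k))]
  · calc ‖r ^ n‖ ≤ ε ^ n := key n h
      _ ≤ _ := le_mul_of_one_le_left (pow_pos hε n).le (by
          nlinarith [Finset.sum_nonneg (fun k (_ : k ∈ range (max N 1)) =>
            div_nonneg (norm_nonneg (r ^ k)) (pow_nonneg hε.le k))])

set_option maxHeartbeats 1000000 in
theorem stmt_6 {A : Type*} [NormedRing A] [NormedAlgebra ℂ A] [CompleteSpace A]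
    (a b ra rb : A) (hra : spectralRadius ℂ ra = 0) (hrb : spectralRadius ℂ rb = 0)
    (hca : a * ra = ra * a) (hcb : b * rb = rb * b) (heq : a - ra = b - rb) :
    varrho a b = 0 := by
  classical
  obtain ⟨c, hc, hceq⟩ : ∃ c : A, a - ra = c ∧ b - rb = c := ⟨a - ra, rfl, heq.symm⟩
  have hc1 : c * ra = ra * c := by
    simp only [← hc, sub_mul, mul_sub, hca]
  have hc2 : c * rb = rb * c := by
    simp only [← hceq, sub_mul, mul_sub, hcb]
  set u : A →ₗ[ℂ] A := LinearMap.mulLeft ℂ ra with hu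
  set v : A →ₗ[ℂ] A := LinearMap.mulRight ℂ rb with hv
  -- key algebraic identity
  have key : ∀ n : ℕ, (fun x => a * x - x * b)^[n] 1 = ((u - v) ^ n) 1 ∧
      c * (((u - v) ^ n) 1) = (((u - v) ^ n) 1) * c := by
    intro n
    induction n with
    | zero => simp
    | succ n ih =>
      obtain ⟨ih1, ih2⟩ := ih
      obtain ⟨x, hx⟩ : ∃ x : A, ((u - v) ^ n) 1 = x := ⟨_, rfl⟩
      rw [hx] at ih1 ih2
      have hxa : ((u - v) ^ (n + 1)) 1 = ra * x - x * rb := by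
        rw [pow_succ', Module.End.mul_apply, hx, LinearMap.sub_apply, hu, hv,
          LinearMap.mulLeft_apply, LinearMap.mulRight_apply]
      have ha' : a = c + ra := by rw [← hc, sub_add_cancel]
      have hb' : b = c + rb := by rw [← hceq, sub_add_cancel]
      have e1 : c * (ra * x) = ra * x * c := by
        rw [← mul_assoc, hc1, mul_assoc, ih2, ← mul_assoc]
      have e2 : c * (x * rb) = x * rb * c := by
        rw [← mul_assoc, ih2, mul_assoc, hc2, ← mul_assoc]
      constructor
      · rw [Function.iterate_succ_apply', ih1, hxa, ha', hb']
        rw [add_mul, mul_add]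
        rw [show c * x = x * c from ih2]
        abel
      · rw [hxa, mul_sub, sub_mul, e1, e2]
  -- norm computation for powers of (-v)
  have hnegv : ∀ (m : ℕ) (y : A), ‖((-v) ^ m) y‖ = ‖y * rb ^ m‖ := by
    intro m
    induction m with
    | zero => simp
    | succ m ih =>
      intro y
      rw [pow_succ, Module.End.mul_apply, LinearMap.neg_apply, hv,
        LinearMap.mulRight_apply, ih, neg_mul, norm_neg, mul_assoc, ← pow_succ']
  -- binomial norm bound
  have hcomm : Commute u (-v) := (LinearMap.commute_mulLeft_right ra rb).neg_right
  have hbound : ∀ n : ℕ, ‖((u - v) ^ n) 1‖ ≤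
      ∑ k ∈ range (n + 1), (n.choose k : ℝ) * (‖ra ^ k‖ * ‖(1 : A) * rb ^ (n - k)‖) := by
    intro n
    rw [sub_eq_add_neg, hcomm.add_pow]
    rw [LinearMap.coe_sum, Finset.sum_apply]
    refine (norm_sum_le _ _).trans (Finset.sum_le_sum fun k _ => ?_)
    rw [Module.End.mul_apply, Module.End.mul_apply]
    have hcast : ((n.choose k : Module.End ℂ A)) (1 : A) = (n.choose k) • (1 : A) :=
      Module.End.natCast_apply _ _
    rw [hcast, hu, LinearMap.pow_mulLeft, LinearMap.mulLeft_apply]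
    calc ‖ra ^ k * (((-v) ^ (n - k)) (n.choose k • (1 : A)))‖
        ≤ ‖ra ^ k‖ * ‖((-v) ^ (n - k)) (n.choose k • (1 : A))‖ := norm_mul_le _ _
      _ = ‖ra ^ k‖ * ‖(n.choose k • (1 : A)) * rb ^ (n - k)‖ := by rw [hnegv]
      _ = ‖ra ^ k‖ * ‖n.choose k • ((1 : A) * rb ^ (n - k))‖ := by rw [smul_mul_assoc]
      _ ≤ ‖ra ^ k‖ * ((n.choose k : ℝ) * ‖(1 : A) * rb ^ (n - k)‖) :=
          mul_le_mul_of_nonneg_left norm_nsmul_le (norm_nonneg _)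
      _ = (n.choose k : ℝ) * (‖ra ^ k‖ * ‖(1 : A) * rb ^ (n - k)‖) := by ring
  -- main analytic argument: the sequence tends to 0
  have hseq : Tendsto (fun n : ℕ => ‖(fun x => a * x - x * b)^[n] 1‖ ^ ((n : ℝ)⁻¹))
      atTop (𝓝 0) := by
    rw [Metric.tendsto_atTop]
    intro ε hε
    have hδ : (0 : ℝ) < ε / 8 := by linarith
    obtain ⟨Ma, hMa1, hMa⟩ := quasinil_bound ra hra hδ
    obtain ⟨Mb, hMb1, hMb⟩ := quasinil_bound rb hrb hδ
    set C : ℝ := max (Ma * Mb * ‖(1 : A)‖) 1 with hC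
    have hC1 : (1 : ℝ) ≤ C := le_max_right _ _
    have hC0 : (0 : ℝ) < C := lt_of_lt_of_le one_pos hC1
    -- global bound
    have hglob : ∀ n : ℕ, ‖(fun x => a * x - x * b)^[n] 1‖ ≤ C * (2 * (ε / 8)) ^ n := by
      intro n
      rw [(key n).1]
      refine (hbound n).trans ?_
      have hterm : ∀ k ∈ range (n + 1), (n.choose k : ℝ) * (‖ra ^ k‖ * ‖(1 : A) * rb ^ (n - k)‖)
          ≤ (n.choose k : ℝ) * ((Ma * Mb * ‖(1 : A)‖) * (ε / 8) ^ n) := by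
        intro k hk
        have hk' : k ≤ n := Nat.lt_succ_iff.1 (Finset.mem_range.1 hk)
        refine mul_le_mul_of_nonneg_left ?_ (Nat.cast_nonneg _)
        have h1 : ‖(1 : A) * rb ^ (n - k)‖ ≤ ‖(1 : A)‖ * (Mb * (ε / 8) ^ (n - k)) :=
          (norm_mul_le _ _).trans (mul_le_mul_of_nonneg_left (hMb _) (norm_nonneg _))
        have h2 : ‖ra ^ k‖ * ‖(1 : A) * rb ^ (n - k)‖ ≤
            (Ma * (ε / 8) ^ k) * (‖(1 : A)‖ * (Mb * (ε / 8) ^ (n - k))) :=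
          mul_le_mul (hMa k) h1 (norm_nonneg _)
            (mul_nonneg (by linarith) (pow_nonneg hδ.le _))
        refine h2.trans (le_of_eq ?_)
        have hpow : (ε / 8 : ℝ) ^ k * (ε / 8) ^ (n - k) = (ε / 8) ^ n := by
          rw [← pow_add, Nat.add_sub_cancel' hk']
        rw [← hpow]; ring
      refine (Finset.sum_le_sum hterm).trans ?_
      rw [← Finset.sum_mul, ← Nat.cast_sum, Nat.sum_range_choose]
      rw [mul_pow]
      push_cast
      calc (2 : ℝ) ^ n * (Ma * Mb * ‖(1 : A)‖ * (ε / 8) ^ n)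
          ≤ 2 ^ n * (C * (ε / 8) ^ n) := by
            refine mul_le_mul_of_nonneg_left
              (mul_le_mul_of_nonneg_right (le_max_left _ _) (pow_nonneg hδ.le _))
              (pow_nonneg two_pos.le _)
        _ = C * (2 ^ n * (ε / 8) ^ n) := by ring
    -- C^(1/n) → 1
    have hCrt : Tendsto (fun n : ℕ => C ^ ((n : ℝ)⁻¹)) atTop (𝓝 1) := by
      have h1 : Tendsto (fun n : ℕ => Real.log C * (n : ℝ)⁻¹) atTop (𝓝 0) := by
        simpa using (tendsto_inv_atTop_zero.comp
          tendsto_natCast_atTop_atTop).const_mul (Real.log C)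
      have h2 := (Real.continuous_exp.tendsto 0).comp h1
      simp only [Function.comp_def, Real.exp_zero] at h2
      refine h2.congr fun n => ?_
      rw [Real.rpow_def_of_pos hC0]
    obtain ⟨N1, hN1⟩ := eventually_atTop.1 (hCrt.eventually (gt_mem_nhds (by norm_num : (1:ℝ) < 2)))
    refine ⟨max N1 1, fun n hn => ?_⟩
    have hn1 : n ≠ 0 := by omega
    have hu0 : (0 : ℝ) ≤ ‖(fun x => a * x - x * b)^[n] 1‖ ^ ((n : ℝ)⁻¹) :=
      Real.rpow_nonneg (norm_nonneg _) _
    rw [Real.dist_eq, sub_zero, abs_of_nonneg hu0]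
    have step1 : ‖(fun x => a * x - x * b)^[n] 1‖ ^ ((n : ℝ)⁻¹) ≤
        (C * (2 * (ε / 8)) ^ n) ^ ((n : ℝ)⁻¹) :=
      Real.rpow_le_rpow (norm_nonneg _) (hglob n) (by positivity)
    have step2 : (C * (2 * (ε / 8)) ^ n) ^ ((n : ℝ)⁻¹) =
        C ^ ((n : ℝ)⁻¹) * (2 * (ε / 8)) := by
      rw [Real.mul_rpow hC0.le (pow_nonneg (by linarith) _),
        Real.pow_rpow_inv_natCast (by linarith) hn1]
    have step3 : C ^ ((n : ℝ)⁻¹) < 2 := hN1 n (le_trans (le_max_left _ _) hn)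
    calc ‖(fun x => a * x - x * b)^[n] 1‖ ^ ((n : ℝ)⁻¹)
        ≤ C ^ ((n : ℝ)⁻¹) * (2 * (ε / 8)) := step1.trans (le_of_eq step2)
      _ ≤ 2 * (2 * (ε / 8)) := by
          refine mul_le_mul_of_nonneg_right step3.le (by linarith)
      _ < ε := by linarith
  exact hseq.limsup_eq
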